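/- Let (ν_{ij}) be an n×n integer matrix with ν_{ii} = 0 and ν_{ij} + ν_{ji} ≥ 0 for all i,j, and suppose that for every pair (i,j) there exists an integer point b of the polytope C(ν) (i.e., b_1 = 0 and −ν_{lk} ≤ b_k − b_l ≤ ν_{kl} for all k,l) with b_i − b_j = ν_{ij}. Then ν_{ik} + ν_{kj} ≥ ν_{ij} for all i,j,k, and hence S = {A ∈ M_n(k) : A_{ij} ∈ p^{ν_{ij}}} is an O-order. -/

import Mathlib

noncomputable section

/-- The fractional ideal `p^ν = π^ν O` inside `k`. -/
def pset (O : Type*) [CommRing O] {k : Type*} [Field k] [Algebra O k] (π : k) (ν : ℤ) :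
    Set k := {x : k | ∃ c : O, x = algebraMap O k c * π ^ ν}

/-- An `O`-order in `M_n(k)`: a subalgebra which is finitely generated as an `O`-module
and is a full lattice (every matrix has a nonzero `O`-multiple in it). -/
def IsOrder (O : Type*) [CommRing O] {k : Type*} [Field k] [Algebra O k] {n : ℕ}
    (S : Subalgebra O (Matrix (Fin n) (Fin n) k)) : Prop :=
  (Subalgebra.toSubmodule S).FG ∧
    ∀ A : Matrix (Fin n) (Fin n) k, ∃ c : O, c ≠ 0 ∧ algebraMap O k c • A ∈ S

/-- A subset of `M_n(k)` is an `O`-order if it is the underlying set of an order. -/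
def IsOrderSet (O : Type*) [CommRing O] {k : Type*} [Field k] [Algebra O k] {n : ℕ}
    (s : Set (Matrix (Fin n) (Fin n) k)) : Prop :=
  ∃ S : Subalgebra O (Matrix (Fin n) (Fin n) k),
    (S : Set (Matrix (Fin n) (Fin n) k)) = s ∧ IsOrder O S

/-- The maximal order `Λ(m₁,…,m_n) = {A : A_{ij} ∈ p^{m_i - m_j}}`. -/
def Lam (O : Type*) [CommRing O] {k : Type*} [Field k] [Algebra O k] {n : ℕ} (π : k)
    (m : Fin n → ℤ) : Set (Matrix (Fin n) (Fin n) k) :=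
  {A | ∀ i j, A i j ∈ pset O π (m i - m j)}

/-- A maximal `O`-order. -/
def IsMaximalOrder (O : Type*) [CommRing O] {k : Type*} [Field k] [Algebra O k] {n : ℕ}
    (S : Subalgebra O (Matrix (Fin n) (Fin n) k)) : Prop :=
  IsOrder O S ∧ ∀ T : Subalgebra O (Matrix (Fin n) (Fin n) k), IsOrder O T → S ≤ T → T = S

/-- `m` is an integer point of the convex polytope `C(ν)` (in the hyperplane `x₁ = 0`). -/
def IntPt {n : ℕ} [NeZero n] (ν : Matrix (Fin n) (Fin n) ℤ) (m : Fin n → ℤ) : Prop :=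
  m 0 = 0 ∧ ∀ i j, -ν j i ≤ m i - m j ∧ m i - m j ≤ ν i j

/-- `ν` is reduced: `C(ν)` contains an integer point and every bounding hyperplane
`x_i - x_j = ν_{ij}` contains an integer point of `C(ν)`. -/
def Reduced {n : ℕ} [NeZero n] (ν : Matrix (Fin n) (Fin n) ℤ) : Prop :=
  (∃ m, IntPt ν m) ∧ ∀ i j, ∃ m, IntPt ν m ∧ m i - m j = ν i j


/-- If every bounding hyperplane `x_i - x_j = ν_{ij}` meets the integer points of
`C(ν)`, then `ν` satisfies the triangle inequality, and hence
`S = (p^{ν_{ij}})` is an `O`-order. -/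
theorem stmt9 {n : ℕ} [NeZero n] {O : Type*} [CommRing O] [IsDomain O] [IsDiscreteValuationRing O]
{k : Type*} [Field k] [Algebra O k] [IsFractionRing O k]
    (ϖ : O) (hϖ : Irreducible ϖ) (π : k) (hπ : π = algebraMap O k ϖ)
    (ν : Matrix (Fin n) (Fin n) ℤ) (hdiag : ∀ i, ν i i = 0)
    (hsym : ∀ i j, 0 ≤ ν i j + ν j i)
    (hmeet : ∀ i j : Fin n, ∃ b : Fin n → ℤ, IntPt ν b ∧ b i - b j = ν i j) :
    (∀ i j l : Fin n, ν i j + ν j l ≥ ν i l) ∧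
    IsOrderSet O {A : Matrix (Fin n) (Fin n) k | ∀ i j, A i j ∈ pset O π (ν i j)} := by
  classical
  have hϖ0 : ϖ ≠ 0 := hϖ.ne_zero
  have hπ0 : π ≠ 0 := by
    rw [hπ]
    exact (map_ne_zero_iff _ (IsFractionRing.injective O k)).mpr hϖ0
  have htri : ∀ i j l : Fin n, ν i j + ν j l ≥ ν i l := by
    intro i j l
    obtain ⟨b, hb, hbil⟩ := hmeet i l
    have h1 := (hb.2 i j).2
    have h2 := (hb.2 j l).2
    omega
  refine ⟨htri, ?_⟩
  -- basic facts about pset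
  have hzero : ∀ μ : ℤ, (0:k) ∈ pset O π μ := fun μ => ⟨0, by simp⟩
  have hadd : ∀ (μ : ℤ) (x y : k), x ∈ pset O π μ → y ∈ pset O π μ → x + y ∈ pset O π μ := by
    rintro μ x y ⟨c, rfl⟩ ⟨d, rfl⟩
    exact ⟨c + d, by rw [map_add]; ring⟩
  have hmul : ∀ (μ₁ μ₂ : ℤ) (x y : k), x ∈ pset O π μ₁ → y ∈ pset O π μ₂ →
      x * y ∈ pset O π (μ₁ + μ₂) := by
    rintro μ₁ μ₂ x y ⟨c, rfl⟩ ⟨d, rfl⟩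
    exact ⟨c * d, by rw [map_mul, zpow_add₀ hπ0]; ring⟩
  have hanti : ∀ μ₁ μ₂ : ℤ, μ₁ ≤ μ₂ → ∀ x : k, x ∈ pset O π μ₂ → x ∈ pset O π μ₁ := by
    rintro μ₁ μ₂ h x ⟨c, rfl⟩
    refine ⟨c * ϖ ^ (μ₂ - μ₁).toNat, ?_⟩
    rw [map_mul, map_pow, ← hπ, ← zpow_natCast π, Int.toNat_of_nonneg (by omega), mul_assoc,
      ← zpow_add₀ hπ0, sub_add_cancel]
  have hsum : ∀ (μ : ℤ) (t : Finset (Fin n)) (f : Fin n → k),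
      (∀ l ∈ t, f l ∈ pset O π μ) → (∑ l ∈ t, f l) ∈ pset O π μ := by
    intro μ t f hf
    exact Finset.sum_induction f (· ∈ pset O π μ) (hadd μ) (hzero μ) hf
  set s := {A : Matrix (Fin n) (Fin n) k | ∀ i j, A i j ∈ pset O π (ν i j)} with hs
  have hdiagmem : ∀ (i : Fin n) (c : O), algebraMap O k c ∈ pset O π (ν i i) := by
    intro i c
    exact ⟨c, by rw [hdiag i]; simp⟩
  refine ⟨{ carrier := s
            zero_mem' := fun i j => by simpa using hzero (ν i j)
            add_mem' := fun {A B} hA hB i j => by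
              simpa [Matrix.add_apply] using hadd _ _ _ (hA i j) (hB i j)
            one_mem' := fun i j => by
              rcases eq_or_ne i j with rfl | hij
              · simpa [Matrix.one_apply_eq] using hdiagmem i 1
              · simpa [Matrix.one_apply_ne hij] using hzero (ν i j)
            mul_mem' := fun {A B} hA hB i j => by
              show (A * B) i j ∈ pset O π (ν i j)
              rw [Matrix.mul_apply]
              refine hsum _ _ _ (fun l _ => ?_)
              exact hanti _ _ (htri i l j) _ (hmul _ _ _ _ (hA i l) (hB l j))
            algebraMap_mem' := fun c i j => by
              rw [Matrix.algebraMap_matrix_apply]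
              rcases eq_or_ne i j with rfl | hij
              · simpa using hdiagmem i c
              · simpa [hij] using hzero (ν i j) }, rfl, ?_, ?_⟩
  · -- finitely generated
    refine ⟨(Finset.univ : Finset (Fin n × Fin n)).image
      (fun p => Matrix.single p.1 p.2 (π ^ ν p.1 p.2)), le_antisymm ?_ ?_⟩
    · rw [Submodule.span_le]
      rintro A hA
      simp only [Finset.coe_image, Set.mem_image, Finset.mem_coe] at hA
      obtain ⟨p, -, rfl⟩ := hA
      obtain ⟨pi, pj⟩ := p
      intro i j
      rcases eq_or_ne (pi, pj) (i, j) with h | h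
      · rw [Prod.mk.injEq] at h
        obtain ⟨rfl, rfl⟩ := h
        rw [Matrix.single_apply_same]
        exact ⟨1, by simp⟩
      · rw [Matrix.single_apply_of_ne _ _ _ _ _ (by
          intro hc; exact h (Prod.ext hc.1 hc.2))]
        exact hzero _
    · intro A hA
      have hA' : ∀ i j, A i j ∈ pset O π (ν i j) := hA
      rw [Matrix.matrix_eq_sum_single A]
      refine Submodule.sum_mem _ (fun i _ => Submodule.sum_mem _ (fun j _ => ?_))
      obtain ⟨c, hc⟩ := hA' i j
      have : Matrix.single i j (A i j)
          = c • Matrix.single i j (π ^ ν i j) := by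
        rw [Matrix.smul_single, hc, Algebra.smul_def]
      rw [this]
      refine Submodule.smul_mem _ _ (Submodule.subset_span ?_)
      simp only [Finset.coe_image, Set.mem_image, Finset.mem_coe]
      exact ⟨(i, j), Finset.mem_univ _, rfl⟩
  · -- full lattice
    intro A
    have key : ∀ x : k, ∃ d : O, d ≠ 0 ∧ ∃ c : O, algebraMap O k d * x = algebraMap O k c := by
      intro x
      obtain ⟨⟨c, d⟩, h⟩ := IsLocalization.surj (nonZeroDivisors O) x
      exact ⟨d, nonZeroDivisors.ne_zero d.2, c, by rw [mul_comm]; exact h⟩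
    choose d hd0 c hc using fun p : Fin n × Fin n => key (A p.1 p.2 * π ^ (-ν p.1 p.2))
    refine ⟨∏ p : Fin n × Fin n, d p, ?_, ?_⟩
    · rw [Finset.prod_ne_zero_iff]
      exact fun p _ => hd0 p
    · intro i j
      show algebraMap O k (∏ p : Fin n × Fin n, d p) • A i j ∈ pset O π (ν i j)
      rw [smul_eq_mul, ← Finset.mul_prod_erase Finset.univ d (Finset.mem_univ (i, j)), map_mul]
      have hcancel : π ^ (-ν i j) * π ^ ν i j = 1 := by
        rw [← zpow_add₀ hπ0, neg_add_cancel, zpow_zero]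
      refine ⟨c (i, j) * (∏ p ∈ Finset.univ.erase (i, j), d p), ?_⟩
      rw [map_mul]
      calc algebraMap O k (d (i, j)) * algebraMap O k (∏ p ∈ Finset.univ.erase (i, j), d p) * A i j
          = algebraMap O k (∏ p ∈ Finset.univ.erase (i, j), d p) *
            (algebraMap O k (d (i, j)) * (A i j * π ^ (-ν i j)) * π ^ ν i j) := by
            rw [show algebraMap O k (d (i, j)) * (A i j * π ^ (-ν i j)) * π ^ ν i j
              = algebraMap O k (d (i, j)) * A i j * (π ^ (-ν i j) * π ^ ν i j) by ring,
              hcancel, mul_one]; ring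
        _ = algebraMap O k (c (i, j)) * algebraMap O k (∏ p ∈ Finset.univ.erase (i, j), d p) * π ^ ν i j := by
            rw [hc (i, j)]; ring
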